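/- If b is a belt assignment with makespan M(b), then there is a belt assignment b' with makespan M(b') ≤ M(b) satisfying both Property (E) and Property (F). -/

import Mathlib

open Finset

variable {α : Type*}

/-- A mould of type `A` is injected in step `i`: `b i = A` and either `i < N`
or the slot `N` steps earlier did not carry `A`. -/
def Injected (N : ℕ) (b : ℕ → Option α) (A : α) (i : ℕ) : Prop :=
  b i = some A ∧ (i < N ∨ b (i - N) ≠ some A)

/-- The number of moulds of type `A` used by the belt function `b`. -/
noncomputable def MouldsUsed (N : ℕ) (b : ℕ → Option α) (A : α) : ℕ :=
  {i | Injected N b A i}.ncard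

/-- A belt assignment: (i) each type `A` occurs exactly `d A` times, (ii) an
injected mould stays on the belt (period `N`) until the demand of its type is
met, (iii) at most `c A` moulds of type `A` are used. -/
def IsBeltAssignment (N : ℕ) (d c : α → ℕ) (b : ℕ → Option α) : Prop :=
  (∀ A : α, {i | b i = some A}.Finite) ∧
  (∀ A : α, {i | b i = some A}.ncard = d A) ∧
  (∀ (i : ℕ) (A : α), b i = some A →
      b (i + N) = some A ∨ {j | b j = some A ∧ j < i + N}.ncard = d A) ∧
  (∀ A : α, MouldsUsed N b A ≤ c A)

/-- The makespan of `b`: the smallest `s` such that for every type `A` all of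
its demand appears among steps `0, …, s - N - 1`. -/
noncomputable def Makespan (N : ℕ) (d : α → ℕ) (b : ℕ → Option α) : ℕ :=
  sInf {s | ∀ A : α, {j | b j = some A ∧ j < s - N}.ncard = d A}

/-- Property (E): every injection happens before every empty slot. -/
def PropE (N : ℕ) (b : ℕ → Option α) : Prop :=
  ∀ (A : α) (i e : ℕ), Injected N b A i → b e = none → i < e

/-- Property (F): if there is an empty slot `e` and strictly fewer than `c A`
moulds of type `A` are used, then `A` does not occur at any step `i ≥ e`. -/
def PropF (N : ℕ) (c : α → ℕ) (b : ℕ → Option α) : Prop :=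
  ∀ (e : ℕ) (A : α), b e = none → MouldsUsed N b A < c A → ∀ i, e ≤ i → b i ≠ some A


lemma filter_lt_succ (X : Finset ℕ) (p : ℕ) :
    X.filter (· < p + 1) = if p ∈ X then insert p (X.filter (· < p)) else X.filter (· < p) := by
  classical
  by_cases hp : p ∈ X
  · rw [if_pos hp]
    ext q
    simp only [Finset.mem_filter, Finset.mem_insert]
    constructor
    · rintro ⟨h1, h2⟩
      rcases Nat.lt_succ_iff_lt_or_eq.mp h2 with h | h
      · exact Or.inr ⟨h1, h⟩
      · exact Or.inl h
    · rintro (rfl | ⟨h1, h2⟩)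
      · exact ⟨hp, Nat.lt_succ_self _⟩
      · exact ⟨h1, Nat.lt_succ_of_lt h2⟩
  · rw [if_neg hp]
    ext q
    simp only [Finset.mem_filter]
    constructor
    · rintro ⟨h1, h2⟩
      rcases Nat.lt_succ_iff_lt_or_eq.mp h2 with h | h
      · exact ⟨h1, h⟩
      · exact absurd (h ▸ h1) hp
    · rintro ⟨h1, h2⟩
      exact ⟨h1, Nat.lt_succ_of_lt h2⟩

lemma count_succ_mem (X : Finset ℕ) (p : ℕ) :
    (p ∈ X ↔ (X.filter (· < p + 1)).card = (X.filter (· < p)).card + 1) ∧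
    (p ∉ X ↔ (X.filter (· < p + 1)).card = (X.filter (· < p)).card) := by
  classical
  have hp' : p ∉ X.filter (· < p) := by
    intro h
    exact absurd (Finset.mem_filter.mp h).2 (lt_irrefl p)
  by_cases hp : p ∈ X
  · rw [filter_lt_succ, if_pos hp, Finset.card_insert_of_notMem hp']
    constructor
    · exact ⟨fun _ => rfl, fun _ => hp⟩
    · exact ⟨fun h => absurd hp h, fun h => by omega⟩
  · rw [filter_lt_succ, if_neg hp]
    constructor
    · exact ⟨fun h => absurd h hp, fun h => by omega⟩
    · exact ⟨fun _ => rfl, fun _ => hp⟩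

/-- write a sum of elements as a sum of complementary counts -/
lemma sum_eq_sum_counts {T : ℕ} (X : Finset ℕ) (hX : X ⊆ Finset.range T) :
    ∑ p ∈ X, p = ∑ m ∈ Finset.range T, (X.card - (X.filter (· < m + 1)).card) := by
  classical
  have h1 : ∀ p ∈ X, p = ((Finset.range T).filter (fun m => m < p)).card := by
    intro p hp
    have hpT : p < T := Finset.mem_range.mp (hX hp)
    have : (Finset.range T).filter (fun m => m < p) = Finset.range p := by
      ext q
      simp only [Finset.mem_filter, Finset.mem_range]
      exact ⟨fun h => h.2, fun h => ⟨lt_trans h hpT, h⟩⟩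
    rw [this, Finset.card_range]
  calc ∑ p ∈ X, p = ∑ p ∈ X, ((Finset.range T).filter (fun m => m < p)).card :=
        Finset.sum_congr rfl h1
    _ = ∑ p ∈ X, ∑ m ∈ Finset.range T, (if m < p then 1 else 0) := by
        apply Finset.sum_congr rfl
        intro p _
        rw [Finset.card_filter]
    _ = ∑ m ∈ Finset.range T, ∑ p ∈ X, (if m < p then 1 else 0) := Finset.sum_comm
    _ = ∑ m ∈ Finset.range T, (X.card - (X.filter (· < m + 1)).card) := by
        apply Finset.sum_congr rfl
        intro m _
        rw [← Finset.card_filter]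
        have hneg : X.filter (fun x => ¬ m < x) = X.filter (· < m + 1) := by
          apply Finset.filter_congr
          intro x _
          constructor <;> intro h <;> omega
        have hsplit := Finset.card_filter_add_card_filter_not
          (s := X) (p := fun p => m < p)
        rw [hneg] at hsplit
        omega

/-- exchange lemma: sum of an antitone function over at most `|S|` elements of `B`
is at most the sum over the set `S` of smallest elements of `B`. -/
lemma sum_le_of_smallest (B S C : Finset ℕ) (g : ℕ → ℕ) (hS : S ⊆ B) (hC : C ⊆ B)
    (hcard : C.card ≤ S.card) (hsmall : ∀ x ∈ S, ∀ y ∈ B, y ∉ S → x < y)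
    (hg : ∀ x y, x ≤ y → g y ≤ g x) : ∑ v ∈ C, g v ≤ ∑ v ∈ S, g v := by
  classical
  have h1 : ∑ v ∈ C ∩ S, g v + ∑ v ∈ C \ S, g v = ∑ v ∈ C, g v := by
    rw [Finset.sum_inter_add_sum_sdiff]
  have h2 : ∑ v ∈ S ∩ C, g v + ∑ v ∈ S \ C, g v = ∑ v ∈ S, g v := by
    rw [Finset.sum_inter_add_sum_sdiff]
  have hIC : C ∩ S = S ∩ C := Finset.inter_comm _ _
  rw [hIC] at h1
  have hcards : (C \ S).card ≤ (S \ C).card := by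
    have e1 := Finset.card_inter_add_card_sdiff C S
    have e2 := Finset.card_inter_add_card_sdiff S C
    rw [hIC] at e1
    omega
  have key : ∑ v ∈ C \ S, g v ≤ ∑ v ∈ S \ C, g v := by
    by_cases hne : (C \ S).Nonempty
    · have hSCne : (S \ C).Nonempty := by
        rw [← Finset.card_pos] at hne ⊢
        omega
      obtain ⟨y₀, hy₀, hy₀inf⟩ := Finset.exists_mem_eq_inf' hSCne g
      have hbound : ∀ x ∈ C \ S, g x ≤ g y₀ := by
        intro x hx
        rcases Finset.mem_sdiff.mp hx with ⟨hxC, hxS⟩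
        rcases Finset.mem_sdiff.mp hy₀ with ⟨hy₀S, _⟩
        have := hsmall y₀ hy₀S x (hC hxC) hxS
        exact hg y₀ x (le_of_lt this)
      calc ∑ v ∈ C \ S, g v ≤ (C \ S).card • g y₀ := Finset.sum_le_card_nsmul _ _ _ hbound
        _ ≤ (S \ C).card • g y₀ := by
            simp only [smul_eq_mul]
            exact Nat.mul_le_mul_right _ hcards
        _ ≤ ∑ v ∈ S \ C, g v := Finset.card_nsmul_le_sum _ _ _ (fun y hy => by
            rw [← hy₀inf]; exact Finset.inf'_le g hy)
    · rw [Finset.not_nonempty_iff_eq_empty.mp hne]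
      simp
  omega


/-- rank of `v` in `s`: number of elements of `s` smaller than `v`. -/
private def rankIn (s : Finset ℕ) (v : ℕ) : ℕ := (s.filter (· < v)).card

/-- the `k` smallest elements of `s`. -/
private def firstk (s : Finset ℕ) (k : ℕ) : Finset ℕ := s.filter (fun v => rankIn s v < k)

private lemma firstk_subset (s : Finset ℕ) (k : ℕ) : firstk s k ⊆ s := Finset.filter_subset _ _

private lemma rankIn_mono (s : Finset ℕ) {x y : ℕ} (h : x ≤ y) : rankIn s x ≤ rankIn s y := by
  apply Finset.card_le_card
  intro z hz
  rcases Finset.mem_filter.mp hz with ⟨h1, h2⟩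
  exact Finset.mem_filter.mpr ⟨h1, lt_of_lt_of_le h2 h⟩

private lemma rankIn_strict (s : Finset ℕ) {x y : ℕ} (hx : x ∈ s) (h : x < y) :
    rankIn s x < rankIn s y := by
  have hsub : insert x (s.filter (· < x)) ⊆ s.filter (· < y) := by
    intro z hz
    rcases Finset.mem_insert.mp hz with rfl | hz
    · exact Finset.mem_filter.mpr ⟨hx, h⟩
    · rcases Finset.mem_filter.mp hz with ⟨h1, h2⟩
      exact Finset.mem_filter.mpr ⟨h1, lt_trans h2 h⟩
  have hx' : x ∉ s.filter (· < x) := by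
    intro hx'; exact absurd (Finset.mem_filter.mp hx').2 (lt_irrefl x)
  have := Finset.card_le_card hsub
  rw [Finset.card_insert_of_notMem hx'] at this
  exact lt_of_lt_of_le (Nat.lt_succ_self _) this

private lemma firstk_lt (s : Finset ℕ) (k : ℕ) {x y : ℕ} (hx : x ∈ firstk s k)
    (hy : y ∈ s) (hy' : y ∉ firstk s k) : x < y := by
  rcases Finset.mem_filter.mp hx with ⟨hxs, hxr⟩
  have hyr : ¬ rankIn s y < k := fun h => hy' (Finset.mem_filter.mpr ⟨hy, h⟩)
  rcases lt_trichotomy x y with h | rfl | h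
  · exact h
  · exact absurd hxr hyr
  · exact absurd (lt_of_le_of_lt (rankIn_mono s (le_of_lt h)) hxr) hyr

private lemma card_firstk (s : Finset ℕ) : ∀ k, k ≤ s.card → (firstk s k).card = k := by
  intro k
  induction k with
  | zero => intro _; simp [firstk]
  | succ k ih =>
    intro hk
    have hk' : k ≤ s.card := le_of_lt hk
    have hcard := ih hk'
    -- R : elements of rank ≥ k
    set R := s.filter (fun v => k ≤ rankIn s v) with hR
    have hRne : R.Nonempty := by
      by_contra hne
      have : s ⊆ firstk s k := by
        intro v hv
        refine Finset.mem_filter.mpr ⟨hv, ?_⟩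
        by_contra hvk
        exact hne ⟨v, Finset.mem_filter.mpr ⟨hv, le_of_not_gt hvk⟩⟩
      have := Finset.card_le_card this
      omega
    set p₀ := R.min' hRne with hp₀
    have hp₀R : p₀ ∈ R := R.min'_mem hRne
    rcases Finset.mem_filter.mp hp₀R with ⟨hp₀s, hp₀r⟩
    have hmin : ∀ q ∈ R, p₀ ≤ q := fun q hq => R.min'_le q hq
    have hA : s.filter (· < p₀) = firstk s k := by
      apply Finset.ext
      intro q
      constructor
      · intro hq
        rcases Finset.mem_filter.mp hq with ⟨hqs, hqlt⟩
        refine Finset.mem_filter.mpr ⟨hqs, ?_⟩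
        by_contra hqk
        exact absurd hqlt (not_lt.mpr (hmin q (Finset.mem_filter.mpr ⟨hqs, le_of_not_gt hqk⟩)))
      · intro hq
        rcases Finset.mem_filter.mp hq with ⟨hqs, hqr⟩
        refine Finset.mem_filter.mpr ⟨hqs, ?_⟩
        by_contra hge
        exact absurd (lt_of_lt_of_le hqr (le_trans hp₀r (rankIn_mono s (le_of_not_gt hge)))) (lt_irrefl _)
    have hrankp₀ : rankIn s p₀ = k := by
      have : rankIn s p₀ = (firstk s k).card := by rw [rankIn, hA]
      omega
    have hB : firstk s (k+1) = insert p₀ (firstk s k) := by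
      apply Finset.ext
      intro v
      constructor
      · intro hv
        rcases Finset.mem_filter.mp hv with ⟨hvs, hvr⟩
        rcases Nat.lt_succ_iff_lt_or_eq.mp hvr with h | h
        · exact Finset.mem_insert.mpr (Or.inr (Finset.mem_filter.mpr ⟨hvs, h⟩))
        · have hvR : v ∈ R := Finset.mem_filter.mpr ⟨hvs, le_of_eq h.symm⟩
          have := hmin v hvR
          rcases eq_or_lt_of_le this with h2 | h2
          · exact Finset.mem_insert.mpr (Or.inl h2.symm)
          · exact absurd (rankIn_strict s hp₀s h2) (by omega)
      · intro hv
        rcases Finset.mem_insert.mp hv with rfl | hv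
        · exact Finset.mem_filter.mpr ⟨hp₀s, by omega⟩
        · rcases Finset.mem_filter.mp hv with ⟨h1, h2⟩
          exact Finset.mem_filter.mpr ⟨h1, by omega⟩
    have hnotin : p₀ ∉ firstk s k := by
      intro h
      have := (Finset.mem_filter.mp h).2
      omega
    rw [hB, Finset.card_insert_of_notMem hnotin, hcard]


/-- configurations we optimize over -/
def BeltOK (N : ℕ) (d c : α → ℕ) (T : ℕ) (x : ℕ → Option α) : Prop :=
  IsBeltAssignment N d c x ∧ ∀ i, T ≤ i → x i = none

/-- the measure: total sum of occupied positions below `T` -/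
noncomputable def beltMu (T : ℕ) (x : ℕ → Option α) : ℕ :=
  ∑ i ∈ Finset.range T, if (x i).isSome then i else 0

lemma bridge {b : ℕ → Option α} {A : α} {dA : ℕ}
    (hfin : {i | b i = some A}.Finite) (hcard : {i | b i = some A}.ncard = dA) (m : ℕ) :
    {j | b j = some A ∧ j < m}.ncard = dA ↔ ∀ j, b j = some A → j < m := by
  constructor
  · intro h
    have hsub : {j | b j = some A ∧ j < m} ⊆ {i | b i = some A} := fun j hj => hj.1
    have heq := Set.eq_of_subset_of_ncard_le hsub (by omega) hfin
    intro j hj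
    have : j ∈ {j | b j = some A ∧ j < m} := heq ▸ hj
    exact this.2
  · intro h
    have : {j | b j = some A ∧ j < m} = {i | b i = some A} := by
      ext j; exact ⟨fun hj => hj.1, fun hj => ⟨hj, h j hj⟩⟩
    rw [this, hcard]

lemma cells_lt {N : ℕ} {d c : α → ℕ} {T : ℕ} {x : ℕ → Option α} (hOK : BeltOK N d c T x)
    {A : α} {i : ℕ} (h : x i = some A) : i < T := by
  by_contra hi
  rw [hOK.2 i (le_of_not_gt hi)] at h
  simp at h

lemma solid_of_min {N : ℕ} (hN : 0 < N) {d c : α → ℕ} {T : ℕ}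
    {b : ℕ → Option α} (hOK : BeltOK N d c T b)
    (hmin : ∀ x : ℕ → Option α, BeltOK N d c T x → beltMu T b ≤ beltMu T x) :
    ∀ e, b e = none → b (e + N) = none := by
  classical
  intro e he
  by_contra hz'
  obtain ⟨C, hz⟩ : ∃ C, b (e + N) = some C := Option.ne_none_iff_exists'.mp hz'
  obtain ⟨hbfin, hbcnt, hbii, hbmu⟩ := hOK.1
  set S := {i | b i = some C} with hS
  have hSfin : S.Finite := hbfin C
  have hzS : (e + N) ∈ S := hz
  have hSne : hSfin.toFinset.Nonempty := ⟨e + N, hSfin.mem_toFinset.mpr hzS⟩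
  set M := hSfin.toFinset.max' hSne with hM
  have hMS : M ∈ S := hSfin.mem_toFinset.mp (hSfin.toFinset.max'_mem hSne)
  have hle : ∀ p ∈ S, p ≤ M := fun p hp => hSfin.toFinset.le_max' p (hSfin.mem_toFinset.mpr hp)
  have hzM : e + N ≤ M := hle _ hzS
  have heM : e < M := by omega
  have heS : e ∉ S := by
    intro h
    rw [hS] at h
    simp only [Set.mem_setOf_eq, he] at h
    simp at h
  have heneM : e ≠ M := by omega
  have hMlt : M < T := cells_lt hOK hMS
  -- the improved configuration
  set b2 : ℕ → Option α := fun p => if p = e then some C else if p = M then none else b p with hb2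
  -- pointwise facts
  have hptW : ∀ (W : α), W ≠ C → ∀ p, (b2 p = some W ↔ b p = some W) := by
    intro W hW p
    rw [hb2]
    by_cases hpe : p = e
    · subst hpe; simp only [if_pos rfl]
      constructor
      · intro h; exact absurd (Option.some_injective _ h).symm hW
      · intro h; rw [he] at h; simp at h
    · by_cases hpM : p = M
      · subst hpM; simp only [if_neg hpe, if_pos rfl]
        constructor
        · intro h; simp at h
        · intro h; rw [hMS] at h; exact absurd (Option.some_injective _ h).symm hW
      · simp only [if_neg hpe, if_neg hpM]
  have hSW : ∀ (W : α), W ≠ C → {p | b2 p = some W} = {p | b p = some W} := by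
    intro W hW; ext p; exact hptW W hW p
  have hb2e : b2 e = some C := by rw [hb2]; simp
  have hb2M : b2 M = none := by rw [hb2]; simp [heneM.symm]
  have hb2other : ∀ p, p ≠ e → p ≠ M → b2 p = b p := by
    intro p h1 h2; rw [hb2]; simp [h1, h2]
  have hSC : {p | b2 p = some C} = insert e (S \ {M}) := by
    ext p
    simp only [Set.mem_setOf_eq, Set.mem_insert_iff, Set.mem_diff, Set.mem_singleton_iff]
    by_cases hpe : p = e
    · subst hpe; simp [hb2e]
    · by_cases hpM : p = M
      · subst hpM
        rw [hb2M]
        constructor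
        · intro h; simp at h
        · rintro (h | ⟨_, h⟩)
          · exact absurd h hpe
          · exact absurd rfl h
      · rw [hb2other p hpe hpM]
        constructor
        · intro h; exact Or.inr ⟨h, hpM⟩
        · rintro (h | ⟨h, _⟩)
          · exact absurd h hpe
          · exact h
  have hcntS : S.ncard = d C := hbcnt C
  have hdC : 1 ≤ d C := by
    have h1 : 0 < S.ncard := (Set.ncard_pos hSfin).mpr ⟨_, hzS⟩
    omega
  have hfinC2 : {p | b2 p = some C}.Finite := by
    rw [hSC]; exact ((hSfin.diff).insert e)
  have hcntC2 : {p | b2 p = some C}.ncard = d C := by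
    rw [hSC]
    rw [Set.ncard_insert_of_notMem (by simp [heS]) (hSfin.diff)]
    rw [Set.ncard_diff_singleton_of_mem hMS]
    omega
  have hfin2 : ∀ W, {p | b2 p = some W}.Finite := by
    intro W
    by_cases hW : W = C
    · subst hW; exact hfinC2
    · rw [hSW W hW]; exact hbfin W
  have hcnt2 : ∀ W, {p | b2 p = some W}.ncard = d W := by
    intro W
    by_cases hW : W = C
    · subst hW; exact hcntC2
    · rw [hSW W hW]; exact hbcnt W

  have hptC : ∀ p, b2 p = some C ↔ (p = e ∨ (b p = some C ∧ p ≠ M)) := by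
    intro p
    by_cases hpe : p = e
    · subst hpe
      simp only [hb2e, true_iff, eq_self_iff_true, true_or]
    · by_cases hpM : p = M
      · subst hpM
        rw [hb2M]
        constructor
        · intro h; simp at h
        · rintro (h | ⟨_, h⟩)
          · exact absurd h hpe
          · exact absurd rfl h
      · rw [hb2other p hpe hpM]
        constructor
        · intro h; exact Or.inr ⟨h, hpM⟩
        · rintro (h | ⟨h, _⟩)
          · exact absurd h hpe
          · exact h
  have hii2 : ∀ (i : ℕ) (W : α), b2 i = some W →
      b2 (i + N) = some W ∨ {j | b2 j = some W ∧ j < i + N}.ncard = d W := by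
    intro i W hi
    by_cases hW : W = C
    · rw [hW] at hi ⊢
      have hallC : (∀ j, b2 j = some C → j < i + N) →
          {j | b2 j = some C ∧ j < i + N}.ncard = d C := by
        intro h; exact (bridge (hfin2 C) (hcnt2 C) _).mpr h
      rcases (hptC i).mp hi with hie | ⟨hiC, hiM⟩
      · subst hie
        by_cases hzMeq : i + N = M
        · right
          apply hallC
          intro j hj
          rcases (hptC j).mp hj with rfl | ⟨hjC, hjM⟩
          · omega
          · have := hle j hjC
            omega
        · left
          exact (hptC (i + N)).mpr (Or.inr ⟨hz, hzMeq⟩)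
      · have hie : i ≠ e := by
          intro h; subst h; rw [he] at hiC; simp at hiC
        rcases hbii i C hiC with hnext | hcnt
        · by_cases hM1 : i + N = M
          · right; apply hallC
            intro j hj
            rcases (hptC j).mp hj with rfl | ⟨hjC, hjM⟩
            · omega
            · have := hle j hjC; omega
          · left
            exact (hptC (i + N)).mpr (Or.inr ⟨hnext, hM1⟩)
        · right; apply hallC
          have hall := (bridge (hbfin C) (hbcnt C) _).mp hcnt
          intro j hj
          rcases (hptC j).mp hj with rfl | ⟨hjC, hjM⟩
          · have := hall _ hz
            omega
          · exact hall j hjC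
    · have hiW : b i = some W := (hptW W hW i).mp hi
      rcases hbii i W hiW with hnext | hcnt
      · left; exact (hptW W hW _).mpr hnext
      · right
        have hall := (bridge (hbfin W) (hbcnt W) _).mp hcnt
        rw [bridge (hfin2 W) (hcnt2 W)]
        intro j hj
        exact hall j ((hptW W hW j).mp hj)
  have hmuC2 : MouldsUsed N b2 C ≤ c C := by
    have hWfin : {p | Injected N b C p}.Finite := hSfin.subset (fun p hp => hp.1)
    have hmaps : ∀ p ∈ {p | Injected N b2 C p},
        (if p = e then e + N else p) ∈ {p | Injected N b C p} := by
      intro p hp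
      by_cases hpe : p = e
      · simp only [if_pos hpe]
        refine ⟨hz, Or.inr ?_⟩
        have h0 : e + N - N = e := by omega
        rw [h0, he]
        intro h; simp at h
      · simp only [if_neg hpe]
        rcases hp with ⟨hp1, hp2⟩
        rcases (hptC p).mp hp1 with h | ⟨hpC, hpM⟩
        · exact absurd h hpe
        refine ⟨hpC, ?_⟩
        rcases hp2 with h | h
        · exact Or.inl h
        · by_cases hpm : p - N = M
          · have hpM' := hle p hpC
            left; omega
          · right
            intro hcon
            exact h ((hptC (p - N)).mpr (Or.inr ⟨hcon, hpm⟩))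
    have hznot : ¬ Injected N b2 C (e + N) := by
      intro hcon
      rcases hcon.2 with h | h
      · omega
      · have h0 : e + N - N = e := by omega
        rw [h0, hb2e] at h
        exact h rfl
    have hinj : Set.InjOn (fun p => if p = e then e + N else p) {p | Injected N b2 C p} := by
      intro p hp q hq heq
      simp only [] at heq
      by_cases hpe : p = e
      · by_cases hqe : q = e
        · rw [hpe, hqe]
        · rw [if_pos hpe, if_neg hqe] at heq
          rw [← heq] at hq
          exact absurd hq hznot
      · by_cases hqe : q = e
        · rw [if_neg hpe, if_pos hqe] at heq
          rw [heq] at hp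
          exact absurd hp hznot
        · rw [if_neg hpe, if_neg hqe] at heq
          exact heq
    have hsub := Set.ncard_le_ncard_of_injOn _ hmaps hinj hWfin
    exact le_trans hsub (hbmu C)
  have hmu2 : ∀ W, MouldsUsed N b2 W ≤ c W := by
    intro W
    by_cases hW : W = C
    · rw [hW]; exact hmuC2
    · have hset : {p | Injected N b2 W p} = {p | Injected N b W p} := by
        ext p
        unfold Injected
        exact and_congr (hptW W hW p) (or_congr Iff.rfl (not_congr (hptW W hW (p - N))))
      unfold MouldsUsed
      rw [hset]
      exact hbmu W
  have hOK2 : BeltOK N d c T b2 := by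
    refine ⟨⟨hfin2, hcnt2, hii2, hmu2⟩, ?_⟩
    intro i hi
    have h1 : i ≠ e := by omega
    have h2 : i ≠ M := by omega
    rw [hb2other i h1 h2]
    exact hOK.2 i hi
  have hmuEq : beltMu T b2 + M = beltMu T b + e := by
    unfold beltMu
    have key : ∀ i ∈ Finset.range T, (if (b2 i).isSome then i else 0) + (if i = M then M else 0)
        = (if (b i).isSome then i else 0) + (if i = e then e else 0) := by
      intro i _
      by_cases h1 : i = e
      · subst h1
        rw [hb2e, he]
        simp [heneM]
      · by_cases h2 : i = M
        · subst h2
          rw [hb2M]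
          have hbM : b M = some C := hMS
          rw [hbM]
          simp [h1]
        · rw [hb2other i h1 h2]
          simp [h1, h2]
    have hsum := Finset.sum_congr rfl key
    rw [Finset.sum_add_distrib, Finset.sum_add_distrib] at hsum
    rw [Finset.sum_ite_eq' (Finset.range T) M (fun _ => M)] at hsum
    rw [Finset.sum_ite_eq' (Finset.range T) e (fun _ => e)] at hsum
    rw [if_pos (Finset.mem_range.mpr hMlt), if_pos (Finset.mem_range.mpr (by omega : e < T))] at hsum
    exact hsum
  have := hmin b2 hOK2
  omega


lemma pour_clean {N : ℕ} (hN : 0 < N) {d c : α → ℕ} (hc : ∀ A, 0 < c A) {T : ℕ}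
    {b : ℕ → Option α} (hOK : BeltOK N d c T b)
    (hmin : ∀ x : ℕ → Option α, BeltOK N d c T x → beltMu T b ≤ beltMu T x)
    (hsolid : ∀ e, b e = none → b (e + N) = none)
    (Z : α)
    (htop : ∀ p, b p = some Z → (b (p + N) = some Z ∨ b (p + N) = none)) :
    (∀ i e, Injected N b Z i → b e = none → i < e) ∧
    (MouldsUsed N b Z < c Z → ∀ i, b i = some Z → ∀ e, b e = none → i < e) := by
  classical
  have hbfin := hOK.1.1
  have hbcnt := hOK.1.2.1
  have hbii := hOK.1.2.2.1
  have hbmu := hOK.1.2.2.2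
  set FreeZ : Set ℕ := {p | b p = none ∨ b p = some Z} with hFreeZ
  have hup : ∀ p, p ∈ FreeZ → (p + N) ∈ FreeZ := by
    rintro p (h | h)
    · exact Or.inl (hsolid p h)
    · rcases htop p h with h2 | h2
      · exact Or.inr h2
      · exact Or.inl h2
  have hupt : ∀ p, p ∈ FreeZ → ∀ t, (p + t * N) ∈ FreeZ := by
    intro p hp t
    induction t with
    | zero => simpa using hp
    | succ t ih =>
      have heq : p + (t + 1) * N = (p + t * N) + N := by ring
      rw [heq]
      exact hup _ ih
  set β : ℕ → ℕ := fun j => sInf {p | p ∈ FreeZ ∧ p % N = j} with hβ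
  have hβprop : ∀ j, j < N → β j ∈ FreeZ ∧ β j % N = j := by
    intro j hj
    have hne : ({p | p ∈ FreeZ ∧ p % N = j} : Set ℕ).Nonempty := by
      refine ⟨T * N + j, ⟨Or.inl (hOK.2 _ ?_), ?_⟩⟩
      · have : T ≤ T * N := Nat.le_mul_of_pos_right T hN
        omega
      · rw [add_comm, Nat.add_mul_mod_self_right]
        exact Nat.mod_eq_of_lt hj
    exact Nat.sInf_mem hne
  have hβle : ∀ p, p ∈ FreeZ → β (p % N) ≤ p := by
    intro p hp
    exact Nat.sInf_le ⟨hp, rfl⟩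
  have hfree_iff : ∀ p, p ∈ FreeZ ↔ β (p % N) ≤ p := by
    intro p
    constructor
    · exact hβle p
    · intro hle
      have hj : p % N < N := Nat.mod_lt _ hN
      obtain ⟨hmem, hmod⟩ := hβprop _ hj
      have hdvd : N ∣ p - β (p % N) := by
        apply (Nat.modEq_iff_dvd' hle).mp
        show β (p % N) % N = p % N
        rw [hmod]
      obtain ⟨t, ht⟩ := hdvd
      rw [mul_comm] at ht
      have heq : p = β (p % N) + t * N := by omega
      rw [heq]
      exact hupt _ hmem t
  set Bf : Finset ℕ := (Finset.range N).image β with hBf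
  have hβinj : Set.InjOn β ↑(Finset.range N) := by
    intro x hx y hy hxy
    have hx' := (hβprop x (by simpa using hx)).2
    have hy' := (hβprop y (by simpa using hy)).2
    rw [← hx', ← hy', hxy]
  have hBcard : Bf.card = N := by
    rw [hBf, Finset.card_image_of_injOn hβinj, Finset.card_range]
  set c' := min (c Z) N with hc'
  have hc'pos : 0 < c' := lt_min (hc Z) hN
  have hc'leB : c' ≤ Bf.card := by rw [hBcard]; exact min_le_right _ _
  set SelB := firstk Bf c' with hSelB
  have hSelcard : SelB.card = c' := card_firstk _ _ hc'leB
  have hSelsub : SelB ⊆ Bf := firstk_subset _ _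
  have hsmall : ∀ x ∈ SelB, ∀ y ∈ Bf, y ∉ SelB → x < y :=
    fun x hx y hy hy' => firstk_lt _ _ hx hy hy'
  set FreeSel : Set ℕ := {p | p ∈ FreeZ ∧ β (p % N) ∈ SelB} with hFreeSel
  have hFSup : ∀ p, p ∈ FreeSel → (p + N) ∈ FreeSel := by
    rintro p ⟨h1, h2⟩
    refine ⟨hup p h1, ?_⟩
    rwa [Nat.add_mod_right]
  have hbase : ∀ v ∈ SelB, v ∈ FreeSel := by
    intro v hv
    obtain ⟨j, hj, hvj⟩ := Finset.mem_image.mp (hSelsub hv)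
    have hjN : j < N := Finset.mem_range.mp hj
    obtain ⟨hm, hmod⟩ := hβprop j hjN
    have hself : β (v % N) = v := by
      rw [← hvj, hmod]
    refine ⟨?_, ?_⟩
    · rw [← hvj]; exact hm
    · rw [hself]; exact hv
  set SF : Finset ℕ := (Finset.range T).filter (fun i => b i = some Z) with hSF
  have hSFmem : ∀ i, i ∈ SF ↔ b i = some Z := by
    intro i
    rw [hSF, Finset.mem_filter, Finset.mem_range]
    exact ⟨fun h => h.2, fun h => ⟨cells_lt hOK h, h⟩⟩
  have hSFset : {i | b i = some Z} = ↑SF := by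
    ext i
    rw [Finset.mem_coe, hSFmem]
    rfl
  have hSFcard : SF.card = d Z := by
    have h := hbcnt Z
    rw [hSFset, Set.ncard_coe_finset] at h
    exact h
  set FSelT : Finset ℕ := (Finset.range T).filter (fun p => p ∈ FreeSel) with hFSelT
  have hDOM : ∀ m, m ≤ T → (SF.filter (· < m)).card ≤ (FSelT.filter (· < m)).card := by
    intro m hm
    have hL : SF.filter (· < m) = (Finset.range m).filter (fun i => b i = some Z) := by
      ext p
      constructor
      · intro hp
        rcases Finset.mem_filter.mp hp with ⟨h1, h2⟩
        exact Finset.mem_filter.mpr ⟨Finset.mem_range.mpr h2, (hSFmem p).mp h1⟩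
      · intro hp
        rcases Finset.mem_filter.mp hp with ⟨h1, h2⟩
        exact Finset.mem_filter.mpr ⟨(hSFmem p).mpr h2, Finset.mem_range.mp h1⟩
    have hR : FSelT.filter (· < m) = (Finset.range m).filter (fun p => p ∈ FreeSel) := by
      ext p
      constructor
      · intro hp
        rcases Finset.mem_filter.mp hp with ⟨h1, h2⟩
        exact Finset.mem_filter.mpr ⟨Finset.mem_range.mpr h2, (Finset.mem_filter.mp h1).2⟩
      · intro hp
        rcases Finset.mem_filter.mp hp with ⟨h1, h2⟩
        have hpm := Finset.mem_range.mp h1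
        exact Finset.mem_filter.mpr
          ⟨Finset.mem_filter.mpr ⟨Finset.mem_range.mpr (by omega), h2⟩, hpm⟩
    rw [hL, hR]
    set colsJ : Finset ℕ := SF.image (fun p => p % N) with hcolsJ
    have hcolsJN : ∀ j ∈ colsJ, j < N := by
      intro j hj
      obtain ⟨p, _, hpj⟩ := Finset.mem_image.mp hj
      rw [← hpj]; exact Nat.mod_lt _ hN
    have hcolsJcard : colsJ.card ≤ c' := by
      rw [hc']
      refine le_min ?_ ?_
      · set f : ℕ → ℕ := fun j => sInf {p | b p = some Z ∧ p % N = j} with hf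
        have hfprop : ∀ j ∈ colsJ, b (f j) = some Z ∧ f j % N = j := by
          intro j hj
          obtain ⟨p, hp, hpj⟩ := Finset.mem_image.mp hj
          have hne : ({p | b p = some Z ∧ p % N = j} : Set ℕ).Nonempty :=
            ⟨p, (hSFmem p).mp hp, hpj⟩
          exact Nat.sInf_mem hne
        have hmaps : ∀ j ∈ (colsJ : Set ℕ), f j ∈ {p | Injected N b Z p} := by
          intro j hj
          obtain ⟨h1, h2⟩ := hfprop j hj
          refine ⟨h1, ?_⟩
          by_cases hfN : f j < N
          · exact Or.inl hfN
          · right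
            intro hcon
            have hmod : (f j - N) % N = j := by
              have h3 : f j - N + N = f j := by omega
              calc (f j - N) % N = (f j - N + N) % N := (Nat.add_mod_right _ _).symm
                _ = j := by rw [h3]; exact h2
            have : f j ≤ f j - N := Nat.sInf_le ⟨hcon, hmod⟩
            omega
        have hinjf : Set.InjOn f ↑colsJ := by
          intro x hx y hy hxy
          have hx' := (hfprop x hx).2
          have hy' := (hfprop y hy).2
          rw [← hx', ← hy', hxy]
        have hInjfin : {p | Injected N b Z p}.Finite :=
          (hbfin Z).subset (fun p hp => hp.1)
        have hle := Set.ncard_le_ncard_of_injOn f hmaps hinjf hInjfin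
        rw [Set.ncard_coe_finset] at hle
        exact le_trans hle (hbmu Z)
      · have hsub : colsJ ⊆ Finset.range N := fun j hj => Finset.mem_range.mpr (hcolsJN j hj)
        calc colsJ.card ≤ (Finset.range N).card := Finset.card_le_card hsub
          _ = N := Finset.card_range N
    set g : ℕ → ℕ := fun v => ((Finset.range m).filter (fun p => v ≤ p ∧ p % N = v % N)).card
      with hg
    have hganti : ∀ v w, v ≤ w → g w ≤ g v := by
      intro v w hvw
      apply Finset.card_le_card_of_injOn (fun p => p - (w - v))
      · intro p hp
        rcases Finset.mem_filter.mp hp with ⟨hpr, hp1, hp2⟩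
        have hpm := Finset.mem_range.mp hpr
        have hdvd : N ∣ p - w := by
          apply (Nat.modEq_iff_dvd' hp1).mp
          exact hp2.symm
        obtain ⟨k, hk⟩ := hdvd
        rw [Nat.mul_comm] at hk
        have heq : p - (w - v) = v + k * N := by omega
        beta_reduce
        refine Finset.mem_filter.mpr ⟨Finset.mem_range.mpr (by omega), by omega, ?_⟩
        rw [heq, Nat.add_mul_mod_self_right]
      · intro p hp q hq heq
        rcases Finset.mem_filter.mp hp with ⟨_, hp1, _⟩
        rcases Finset.mem_filter.mp hq with ⟨_, hq1, _⟩
        simp only [] at heq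
        omega
    have hpart : (Finset.range m).filter (fun i => b i = some Z) =
        colsJ.biUnion (fun j => (Finset.range m).filter (fun p => b p = some Z ∧ p % N = j)) := by
      ext p
      constructor
      · intro hp
        rcases Finset.mem_filter.mp hp with ⟨h1, h2⟩
        refine Finset.mem_biUnion.mpr ⟨p % N, ?_, Finset.mem_filter.mpr ⟨h1, h2, rfl⟩⟩
        exact Finset.mem_image.mpr ⟨p, (hSFmem p).mpr h2, rfl⟩
      · intro hp
        obtain ⟨j, _, hpj⟩ := Finset.mem_biUnion.mp hp
        rcases Finset.mem_filter.mp hpj with ⟨h1, h2, _⟩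
        exact Finset.mem_filter.mpr ⟨h1, h2⟩
    have hdisj : ∀ j1 ∈ colsJ, ∀ j2 ∈ colsJ, j1 ≠ j2 →
        Disjoint ((Finset.range m).filter (fun p => b p = some Z ∧ p % N = j1))
                 ((Finset.range m).filter (fun p => b p = some Z ∧ p % N = j2)) := by
      intro j1 _ j2 _ hne
      rw [Finset.disjoint_left]
      intro p hp1 hp2
      have e1 := (Finset.mem_filter.mp hp1).2.2
      have e2 := (Finset.mem_filter.mp hp2).2.2
      exact hne (by omega)
    have hcolle : ∀ j ∈ colsJ,
        ((Finset.range m).filter (fun p => b p = some Z ∧ p % N = j)).card ≤ g (β j) := by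
      intro j hj
      have hjN := hcolsJN j hj
      have hmod := (hβprop j hjN).2
      apply Finset.card_le_card
      intro p hp
      rcases Finset.mem_filter.mp hp with ⟨h1, h2, h3⟩
      refine Finset.mem_filter.mpr ⟨h1, ?_, ?_⟩
      · have hfree : p ∈ FreeZ := Or.inr h2
        have hβp := hβle p hfree
        rw [h3] at hβp
        exact hβp
      · rw [h3, hmod]
    set colsB := colsJ.image β with hcolsB
    have hβinjJ : Set.InjOn β ↑colsJ := by
      intro x hx y hy hxy
      exact hβinj (Finset.mem_coe.mpr (Finset.mem_range.mpr (hcolsJN x hx)))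
        (Finset.mem_coe.mpr (Finset.mem_range.mpr (hcolsJN y hy))) hxy
    have hcolsBsub : colsB ⊆ Bf := by
      intro v hv
      obtain ⟨j, hj, hjv⟩ := Finset.mem_image.mp hv
      exact Finset.mem_image.mpr ⟨j, Finset.mem_range.mpr (hcolsJN j hj), hjv⟩
    have hcolsBcard : colsB.card ≤ SelB.card := by
      rw [hcolsB, Finset.card_image_of_injOn hβinjJ, hSelcard]
      exact hcolsJcard
    have hsum1 : ∑ j ∈ colsJ, g (β j) = ∑ v ∈ colsB, g v :=
      (Finset.sum_image (fun x hx y hy hxy => hβinjJ hx hy hxy)).symm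
    have hexch : ∑ v ∈ colsB, g v ≤ ∑ v ∈ SelB, g v :=
      sum_le_of_smallest Bf SelB colsB g hSelsub hcolsBsub hcolsBcard hsmall hganti
    have hpartR : (Finset.range m).filter (fun p => p ∈ FreeSel) =
        SelB.biUnion (fun v => (Finset.range m).filter (fun p => v ≤ p ∧ p % N = v % N)) := by
      ext p
      constructor
      · intro hp
        rcases Finset.mem_filter.mp hp with ⟨h1, h2, h3⟩
        refine Finset.mem_biUnion.mpr ⟨β (p % N), h3,
          Finset.mem_filter.mpr ⟨h1, hβle p h2, ?_⟩⟩
        rw [(hβprop (p % N) (Nat.mod_lt _ hN)).2]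
      · intro hp
        obtain ⟨v, hv, hpv⟩ := Finset.mem_biUnion.mp hp
        rcases Finset.mem_filter.mp hpv with ⟨h1, h2, h3⟩
        obtain ⟨j, hj, hjv⟩ := Finset.mem_image.mp (hSelsub hv)
        have hjN := Finset.mem_range.mp hj
        have hmodv : v % N = j := by rw [← hjv]; exact (hβprop j hjN).2
        have hpj : p % N = j := by rw [h3, hmodv]
        have hβp : β (p % N) = v := by rw [hpj, hjv]
        have hfree : p ∈ FreeZ := (hfree_iff p).mpr (by rw [hβp]; exact h2)
        exact Finset.mem_filter.mpr ⟨h1, hfree, by rw [hβp]; exact hv⟩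
    have hdisjR : ∀ v1 ∈ SelB, ∀ v2 ∈ SelB, v1 ≠ v2 →
        Disjoint ((Finset.range m).filter (fun p => v1 ≤ p ∧ p % N = v1 % N))
                 ((Finset.range m).filter (fun p => v2 ≤ p ∧ p % N = v2 % N)) := by
      intro v1 hv1 v2 hv2 hne
      rw [Finset.disjoint_left]
      intro p hp1 hp2
      have e1 := (Finset.mem_filter.mp hp1).2.2
      have e2 := (Finset.mem_filter.mp hp2).2.2
      obtain ⟨j1, hj1, hjv1⟩ := Finset.mem_image.mp (hSelsub hv1)
      obtain ⟨j2, hj2, hjv2⟩ := Finset.mem_image.mp (hSelsub hv2)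
      have hm1 : v1 % N = j1 := by rw [← hjv1]; exact (hβprop j1 (Finset.mem_range.mp hj1)).2
      have hm2 : v2 % N = j2 := by rw [← hjv2]; exact (hβprop j2 (Finset.mem_range.mp hj2)).2
      have : j1 = j2 := by omega
      exact hne (by rw [← hjv1, ← hjv2, this])
    calc ((Finset.range m).filter (fun i => b i = some Z)).card
        = ∑ j ∈ colsJ, ((Finset.range m).filter (fun p => b p = some Z ∧ p % N = j)).card := by
          rw [hpart]; exact Finset.card_biUnion hdisj
      _ ≤ ∑ j ∈ colsJ, g (β j) := Finset.sum_le_sum hcolle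
      _ = ∑ v ∈ colsB, g v := hsum1
      _ ≤ ∑ v ∈ SelB, g v := hexch
      _ = ((Finset.range m).filter (fun p => p ∈ FreeSel)).card := by
          rw [hpartR]; exact (Finset.card_biUnion hdisjR).symm
  have hFScard : d Z ≤ FSelT.card := by
    have h := hDOM T le_rfl
    have h1 : SF.filter (· < T) = SF := by
      apply Finset.filter_true_of_mem
      intro p hp
      exact Finset.mem_range.mp (Finset.mem_filter.mp hp).1
    have h2 : FSelT.filter (· < T) = FSelT := by
      apply Finset.filter_true_of_mem
      intro p hp
      exact Finset.mem_range.mp (Finset.mem_filter.mp hp).1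
    rw [h1, h2, hSFcard] at h
    exact le_trans h (le_refl _)
  set PF := firstk FSelT (d Z) with hPFdef
  have hPFcard : PF.card = d Z := card_firstk _ _ hFScard
  have hPFsub : PF ⊆ FSelT := firstk_subset _ _
  have hPFlt' : ∀ x ∈ PF, ∀ y ∈ FSelT, y ∉ PF → x < y :=
    fun x hx y hy hy' => firstk_lt _ _ hx hy hy'
  have hPFrange : ∀ p ∈ PF, p < T :=
    fun p hp => Finset.mem_range.mp (Finset.mem_filter.mp (hPFsub hp)).1
  have hPFfree : ∀ p ∈ PF, p ∈ FreeSel :=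
    fun p hp => (Finset.mem_filter.mp (hPFsub hp)).2
  have hgt : ∀ q, q ∈ FreeSel → q ∉ PF → ∀ p ∈ PF, p < q := by
    intro q hq hqP p hp
    by_cases hqT : q < T
    · exact hPFlt' p hp q (Finset.mem_filter.mpr ⟨Finset.mem_range.mpr hqT, hq⟩) hqP
    · have := hPFrange p hp; omega
  set b2 : ℕ → Option α := fun p => if p ∈ PF then some Z else if b p = some Z then none else b p
    with hb2
  have hb2P : ∀ p, p ∈ PF → b2 p = some Z := by
    intro p hp; rw [hb2]; simp [hp]
  have hptZ : ∀ p, b2 p = some Z ↔ p ∈ PF := by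
    intro p
    by_cases hp : p ∈ PF
    · exact iff_of_true (hb2P p hp) hp
    · simp only [hb2, if_neg hp]
      by_cases hbp : b p = some Z
      · rw [if_pos hbp]
        constructor
        · intro h; simp at h
        · intro h; exact absurd h hp
      · rw [if_neg hbp]
        constructor
        · intro h; exact absurd h hbp
        · intro h; exact absurd h hp
  have hptW : ∀ (W : α), W ≠ Z → ∀ p, (b2 p = some W ↔ b p = some W) := by
    intro W hW p
    by_cases hp : p ∈ PF
    · simp only [hb2, if_pos hp]
      constructor
      · intro h; exact absurd (Option.some_injective _ h).symm hW
      · intro h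
        obtain ⟨hfz, _⟩ := hPFfree p hp
        rcases hfz with h2 | h2
        · rw [h2] at h; simp at h
        · rw [h2] at h
          exact absurd (Option.some_injective _ h).symm hW
    · simp only [hb2, if_neg hp]
      by_cases hbp : b p = some Z
      · rw [if_pos hbp]
        constructor
        · intro h; simp at h
        · intro h
          rw [hbp] at h
          exact absurd (Option.some_injective _ h).symm hW
      · rw [if_neg hbp]
  have hSW2 : ∀ (W : α), W ≠ Z → {p | b2 p = some W} = {p | b p = some W} :=
    fun W hW => Set.ext (hptW W hW)
  have hSZ2 : {p | b2 p = some Z} = ↑PF := by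
    ext p; rw [Set.mem_setOf_eq, hptZ, Finset.mem_coe]
  have hfin2 : ∀ W, {p | b2 p = some W}.Finite := by
    intro W
    by_cases hW : W = Z
    · rw [hW, hSZ2]; exact PF.finite_toSet
    · rw [hSW2 W hW]; exact hbfin W
  have hcnt2 : ∀ W, {p | b2 p = some W}.ncard = d W := by
    intro W
    by_cases hW : W = Z
    · rw [hW, hSZ2, Set.ncard_coe_finset, hPFcard]
    · rw [hSW2 W hW]; exact hbcnt W
  have hii2 : ∀ (i : ℕ) (W : α), b2 i = some W →
      b2 (i + N) = some W ∨ {j | b2 j = some W ∧ j < i + N}.ncard = d W := by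
    intro i W hi
    by_cases hW : W = Z
    · subst hW
      have hiP : i ∈ PF := (hptZ i).mp hi
      by_cases hiN : (i + N) ∈ PF
      · left; exact hb2P _ hiN
      · right
        rw [bridge (hfin2 W) (hcnt2 W)]
        intro q hq
        have hqP : q ∈ PF := (hptZ q).mp hq
        have hiNfree : (i + N) ∈ FreeSel := hFSup i (hPFfree i hiP)
        exact hgt (i + N) hiNfree hiN q hqP
    · have hiW : b i = some W := (hptW W hW i).mp hi
      rcases hbii i W hiW with hnext | hcnt
      · left; exact (hptW W hW _).mpr hnext
      · right
        have hall := (bridge (hbfin W) (hbcnt W) _).mp hcnt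
        rw [bridge (hfin2 W) (hcnt2 W)]
        intro q hq
        exact hall q ((hptW W hW q).mp hq)
  have hinjbase : ∀ p, Injected N b2 Z p → p ∈ SelB := by
    intro p hp
    obtain ⟨hp1, hp2⟩ := hp
    have hpP : p ∈ PF := (hptZ p).mp hp1
    obtain ⟨hpFZ, hpSel⟩ := hPFfree p hpP
    have hβlep : β (p % N) ≤ p := hβle p hpFZ
    by_cases hpv : β (p % N) = p
    · rw [← hpv]; exact hpSel
    · exfalso
      have hlt : β (p % N) < p := lt_of_le_of_ne hβlep hpv
      have hmod := (hβprop (p % N) (Nat.mod_lt _ hN)).2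
      have hdvd : N ∣ p - β (p % N) := by
        apply (Nat.modEq_iff_dvd' hβlep).mp
        show β (p % N) % N = p % N
        rw [hmod]
      obtain ⟨k, hk⟩ := hdvd
      rw [Nat.mul_comm] at hk
      have hkpos : 1 ≤ k := by
        rcases Nat.eq_zero_or_pos k with rfl | h
        · omega
        · omega
      have hpN : N ≤ p := by
        have : 1 * N ≤ k * N := Nat.mul_le_mul_right N hkpos
        omega
      have hmodpN : (p - N) % N = p % N := by
        have h3 : p - N + N = p := by omega
        calc (p - N) % N = (p - N + N) % N := (Nat.add_mod_right _ _).symm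
          _ = p % N := by rw [h3]
      have hpNfree : (p - N) ∈ FreeZ := by
        rw [hfree_iff, hmodpN]
        have h1N : 1 * N ≤ k * N := Nat.mul_le_mul_right N hkpos
        omega
      have hpNsel : (p - N) ∈ FreeSel := ⟨hpNfree, by rw [hmodpN]; exact hpSel⟩
      have hpNP : (p - N) ∈ PF := by
        by_contra hno
        have := hgt (p - N) hpNsel hno p hpP
        omega
      have hb2pN : b2 (p - N) = some Z := hb2P _ hpNP
      rcases hp2 with h | h
      · omega
      · exact h hb2pN
  have hmu2 : ∀ W, MouldsUsed N b2 W ≤ c W := by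
    intro W
    by_cases hW : W = Z
    · subst hW
      have hsub : {p | Injected N b2 W p} ⊆ ↑SelB := fun p hp => hinjbase p hp
      have hle := Set.ncard_le_ncard hsub SelB.finite_toSet
      rw [Set.ncard_coe_finset] at hle
      unfold MouldsUsed
      calc {i | Injected N b2 W i}.ncard ≤ SelB.card := hle
        _ = c' := hSelcard
        _ ≤ c W := min_le_left _ _
    · have hset : {p | Injected N b2 W p} = {p | Injected N b W p} := by
        ext p
        unfold Injected
        exact and_congr (hptW W hW p) (or_congr Iff.rfl (not_congr (hptW W hW (p - N))))
      unfold MouldsUsed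
      rw [hset]
      exact hbmu W
  have hOK2 : BeltOK N d c T b2 := by
    refine ⟨⟨hfin2, hcnt2, hii2, hmu2⟩, ?_⟩
    intro i hi
    have h1 : i ∉ PF := fun h => absurd (hPFrange i h) (by omega)
    simp only [hb2, if_neg h1]
    have h2 : ¬ (b i = some Z) := by
      rw [hOK.2 i hi]
      intro h; simp at h
    rw [if_neg h2]
    exact hOK.2 i hi
  have hcntP : ∀ m, m ≤ T → (SF.filter (· < m)).card ≤ (PF.filter (· < m)).card := by
    intro m hm
    have hFm := hDOM m hm
    by_cases hcase : (FSelT.filter (· < m)).card ≤ d Z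
    · have hsub : FSelT.filter (· < m) ⊆ PF.filter (· < m) := by
        intro q hq
        rcases Finset.mem_filter.mp hq with ⟨hq1, hq2⟩
        refine Finset.mem_filter.mpr ⟨?_, hq2⟩
        by_contra hno
        have hall : ∀ p ∈ PF, p < q := fun p hp => hPFlt' p hp q hq1 hno
        have hnoPF : q ∉ PF := hno
        have hsub2 : insert q PF ⊆ FSelT.filter (· < m) := by
          intro x hx
          rcases Finset.mem_insert.mp hx with rfl | hx
          · exact Finset.mem_filter.mpr ⟨hq1, hq2⟩
          · refine Finset.mem_filter.mpr ⟨hPFsub hx, ?_⟩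
            have := hall x hx; omega
        have hcard2 := Finset.card_le_card hsub2
        rw [Finset.card_insert_of_notMem hnoPF, hPFcard] at hcard2
        omega
      calc (SF.filter (· < m)).card ≤ (FSelT.filter (· < m)).card := hFm
        _ ≤ (PF.filter (· < m)).card := Finset.card_le_card hsub
    · push_neg at hcase
      have hsub : PF ⊆ PF.filter (· < m) := by
        intro p hp
        refine Finset.mem_filter.mpr ⟨hp, ?_⟩
        by_contra hno
        have hsub2 : FSelT.filter (· < m) ⊆ PF := by
          intro q hq
          rcases Finset.mem_filter.mp hq with ⟨hq1, hq2⟩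
          by_contra hq3
          have := hPFlt' p hp q hq1 hq3
          omega
        have := Finset.card_le_card hsub2
        rw [hPFcard] at this
        omega
      have h1 : (PF.filter (· < m)).card = d Z := by
        have ha := Finset.card_le_card (Finset.filter_subset (· < m) PF)
        have hb' := Finset.card_le_card hsub
        omega
      have h2 : (SF.filter (· < m)).card ≤ d Z := by
        have := Finset.card_le_card (Finset.filter_subset (· < m) SF)
        omega
      omega
  have hPFr : PF ⊆ Finset.range T := fun p hp => Finset.mem_range.mpr (hPFrange p hp)
  have hSFr : SF ⊆ Finset.range T := Finset.filter_subset _ _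
  have hsumPF := sum_eq_sum_counts PF hPFr
  have hsumSF := sum_eq_sum_counts SF hSFr
  have hterm_le : ∀ m ∈ Finset.range T,
      PF.card - (PF.filter (· < m + 1)).card ≤ SF.card - (SF.filter (· < m + 1)).card := by
    intro m hm
    have h1 := hcntP (m + 1) (by have := Finset.mem_range.mp hm; omega)
    rw [hPFcard, hSFcard]
    omega
  have hsumle : ∑ p ∈ PF, p ≤ ∑ p ∈ SF, p := by
    rw [hsumPF, hsumSF]
    exact Finset.sum_le_sum hterm_le
  have heqcase : ∑ p ∈ PF, p = ∑ p ∈ SF, p → PF = SF := by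
    intro heq
    have hsums : ∑ m ∈ Finset.range T, (SF.card - (SF.filter (· < m+1)).card)
        = ∑ m ∈ Finset.range T, (PF.card - (PF.filter (· < m+1)).card) := by
      rw [← hsumPF, ← hsumSF, heq]
    have hterm := (Finset.sum_eq_sum_iff_of_le hterm_le).mp hsums.symm
    have hcnteq : ∀ m, m < T → (PF.filter (· < m + 1)).card = (SF.filter (· < m+1)).card := by
      intro m hm
      have h0 := hterm m (Finset.mem_range.mpr hm)
      have h1 := Finset.card_le_card (Finset.filter_subset (· < m + 1) PF)
      have h2 := Finset.card_le_card (Finset.filter_subset (· < m + 1) SF)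
      rw [hPFcard] at h1
      rw [hSFcard] at h2
      rw [hPFcard, hSFcard] at h0
      omega
    have hcnteq0 : ∀ m, m ≤ T → (PF.filter (· < m)).card = (SF.filter (· < m)).card := by
      intro m hmT
      rcases Nat.eq_zero_or_pos m with rfl | hpos
      · have e1 : PF.filter (· < 0) = ∅ := by
          apply Finset.filter_false_of_mem
          intro p _; omega
        have e2 : SF.filter (· < 0) = ∅ := by
          apply Finset.filter_false_of_mem
          intro p _; omega
        rw [e1, e2]
      · have : m - 1 < T := by omega
        have := hcnteq (m - 1) this
        have heq' : m - 1 + 1 = m := by omega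
        rw [heq'] at this
        exact this
    apply Finset.ext
    intro p
    by_cases hpT : p < T
    · have ha := hcnteq0 p (by omega)
      have hb' := hcnteq0 (p + 1) (by omega)
      constructor
      · intro hp
        have := ((count_succ_mem PF p).1).mp hp
        by_contra hq
        have := ((count_succ_mem SF p).2).mp hq
        omega
      · intro hp
        have := ((count_succ_mem SF p).1).mp hp
        by_contra hq
        have := ((count_succ_mem PF p).2).mp hq
        omega
    · constructor
      · intro hp; exact absurd (hPFrange p hp) hpT
      · intro hp
        exact absurd (Finset.mem_range.mp (hSFr hp)) hpT
  have hPS : PF = SF := by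
    by_contra hPS
    have hlt : ∑ p ∈ PF, p < ∑ p ∈ SF, p := by
      rcases lt_or_eq_of_le hsumle with h | h
      · exact h
      · exact absurd (heqcase h) hPS
    set OF := (Finset.range T).filter (fun i => (b i).isSome) with hOF
    set OF2 := (Finset.range T).filter (fun i => (b2 i).isSome) with hOF2
    have hSFOF : SF ⊆ OF := by
      intro p hp
      rcases Finset.mem_filter.mp hp with ⟨h1, h2⟩
      exact Finset.mem_filter.mpr ⟨h1, by rw [h2]; rfl⟩
    have hOF2eq : OF2 = (OF \ SF) ∪ PF := by
      ext p
      constructor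
      · intro hp
        rcases Finset.mem_filter.mp hp with ⟨h1, h2⟩
        by_cases hpPF : p ∈ PF
        · exact Finset.mem_union_right _ hpPF
        · apply Finset.mem_union_left
          simp only [hb2, if_neg hpPF] at h2
          by_cases hbp : b p = some Z
          · rw [if_pos hbp] at h2
            exact absurd h2 (by simp)
          · rw [if_neg hbp] at h2
            refine Finset.mem_sdiff.mpr ⟨Finset.mem_filter.mpr ⟨h1, h2⟩, ?_⟩
            intro hsf
            exact hbp ((hSFmem p).mp hsf)
      · intro hp
        rcases Finset.mem_union.mp hp with hp | hp
        · rcases Finset.mem_sdiff.mp hp with ⟨hpOF, hpSF⟩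
          rcases Finset.mem_filter.mp hpOF with ⟨h1, h2⟩
          refine Finset.mem_filter.mpr ⟨h1, ?_⟩
          have hbp : ¬ (b p = some Z) := fun h => hpSF ((hSFmem p).mpr h)
          by_cases hpPF : p ∈ PF
          · rw [hb2P p hpPF]; rfl
          · simp only [hb2, if_neg hpPF, if_neg hbp]
            exact h2
        · refine Finset.mem_filter.mpr ⟨Finset.mem_range.mpr (hPFrange p hp), ?_⟩
          rw [hb2P p hp]; rfl
    have hdisjU : Disjoint (OF \ SF) PF := by
      rw [Finset.disjoint_right]
      intro p hpPF hpD
      rcases Finset.mem_sdiff.mp hpD with ⟨hpOF, hpSF⟩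
      obtain ⟨hfz, _⟩ := hPFfree p hpPF
      rcases Finset.mem_filter.mp hpOF with ⟨_, h2⟩
      rcases hfz with h3 | h3
      · rw [h3] at h2; exact absurd h2 (by simp)
      · exact hpSF ((hSFmem p).mpr h3)
    have hOFsum : ∑ p ∈ OF, p = beltMu T b := by
      rw [hOF, Finset.sum_filter]
      unfold beltMu
      apply Finset.sum_congr rfl
      intro i _
      by_cases h : (b i).isSome <;> simp [h]
    have hOF2sum : ∑ p ∈ OF2, p = beltMu T b2 := by
      rw [hOF2, Finset.sum_filter]
      unfold beltMu
      apply Finset.sum_congr rfl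
      intro i _
      by_cases h : (b2 i).isSome <;> simp [h]
    have hmub : ∑ p ∈ OF \ SF, p + ∑ p ∈ SF, p = beltMu T b := by
      rw [← hOFsum]
      exact Finset.sum_sdiff hSFOF
    have hmub2 : ∑ p ∈ OF \ SF, p + ∑ p ∈ PF, p = beltMu T b2 := by
      rw [← hOF2sum, hOF2eq]
      exact (Finset.sum_union hdisjU).symm
    have hcontra := hmin b2 hOK2
    omega
  have hb2b : b2 = b := by
    funext p
    by_cases hp : p ∈ PF
    · rw [hb2P p hp]
      have hpSF : p ∈ SF := by rw [← hPS]; exact hp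
      exact ((hSFmem p).mp hpSF).symm
    · have hbp : ¬ (b p = some Z) := by
        intro h
        exact hp (by rw [hPS]; exact (hSFmem p).mpr h)
      simp only [hb2, if_neg hp, if_neg hbp]
  have hselcase : ∀ i ∈ PF, ∀ e, b e = none → β (e % N) ∈ SelB → i < e := by
    intro i hiPF e hempty hesel
    have heFS : e ∈ FreeSel := ⟨Or.inl hempty, hesel⟩
    have heP : e ∉ PF := by
      intro h
      rw [hPS] at h
      rw [(hSFmem e).mp h] at hempty
      simp at hempty
    exact hgt e heFS heP i hiPF
  have hβeBf : ∀ e : ℕ, β (e % N) ∈ Bf := by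
    intro e
    exact Finset.mem_image.mpr ⟨e % N, Finset.mem_range.mpr (Nat.mod_lt _ hN), rfl⟩
  constructor
  · intro i e hinj hempty
    have hinj2 : Injected N b2 Z i := by rw [hb2b]; exact hinj
    have hiSel : i ∈ SelB := hinjbase i hinj2
    have hiPF : i ∈ PF := by rw [hPS]; exact (hSFmem i).mpr hinj.1
    by_cases hesel : β (e % N) ∈ SelB
    · exact hselcase i hiPF e hempty hesel
    · have h1 : i < β (e % N) := hsmall i hiSel _ (hβeBf e) hesel
      have h2 : β (e % N) ≤ e := hβle e (Or.inl hempty)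
      omega
  · intro hu i hcell e hempty
    have hiPF : i ∈ PF := by rw [hPS]; exact (hSFmem i).mpr hcell
    by_cases hesel : β (e % N) ∈ SelB
    · exact hselcase i hiPF e hempty hesel
    · have hInjEq : {p | Injected N b Z p} = ↑(SelB ∩ PF) := by
        ext p
        simp only [Set.mem_setOf_eq, Finset.coe_inter, Set.mem_inter_iff, Finset.mem_coe]
        constructor
        · intro hp
          have hp2 : Injected N b2 Z p := by rw [hb2b]; exact hp
          exact ⟨hinjbase p hp2, by rw [hPS]; exact (hSFmem p).mpr hp.1⟩
        · rintro ⟨h1, h2⟩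
          have hpcell : b p = some Z := (hSFmem p).mp (by rw [← hPS]; exact h2)
          refine ⟨hpcell, ?_⟩
          obtain ⟨j, hj, hjv⟩ := Finset.mem_image.mp (hSelsub h1)
          have hjN := Finset.mem_range.mp hj
          have hmodp : p % N = j := by rw [← hjv]; exact (hβprop j hjN).2
          by_cases hpN : p < N
          · exact Or.inl hpN
          · right
            intro hcon
            have hmodpN : (p - N) % N = j := by
              have h3 : p - N + N = p := by omega
              calc (p - N) % N = (p - N + N) % N := (Nat.add_mod_right _ _).symm
                _ = j := by rw [h3]; exact hmodp
            have hmem : (p - N) ∈ {q | q ∈ FreeZ ∧ q % N = j} := ⟨Or.inr hcon, hmodpN⟩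
            have hle2 : β j ≤ p - N := Nat.sInf_le hmem
            rw [hjv] at hle2
            omega
      have hcardInj : MouldsUsed N b Z = (SelB ∩ PF).card := by
        unfold MouldsUsed
        rw [hInjEq, Set.ncard_coe_finset]
      by_cases hAex : ∃ v ∈ SelB, v ∉ PF
      · obtain ⟨v, hvS, hvP⟩ := hAex
        have hvFS : v ∈ FreeSel := hbase v hvS
        have h1 : i < v := hgt v hvFS hvP i hiPF
        have h2 : v < β (e % N) := hsmall v hvS _ (hβeBf e) hesel
        have h3 : β (e % N) ≤ e := hβle e (Or.inl hempty)
        omega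
      · push_neg at hAex
        have hinter : SelB ∩ PF = SelB := Finset.inter_eq_left.mpr hAex
        rw [hcardInj, hinter, hSelcard] at hu
        have hcN : c' = N := by
          rcases le_total (c Z) N with h | h
          · rw [hc', min_eq_left h] at hu
            exact absurd hu (lt_irrefl _)
          · rw [hc']; exact min_eq_right h
        have hSelBf : SelB = Bf :=
          Finset.eq_of_subset_of_card_le hSelsub (by rw [hSelcard, hcN, hBcard])
        exact absurd (by rw [hSelBf]; exact hβeBf e) hesel

theorem statement5_finite [Finite α] (N : ℕ) (hN : 0 < N)
    (d c : α → ℕ) (hd : ∀ A, 0 < d A) (hc : ∀ A, 0 < c A)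
    (b : ℕ → Option α) (hb : IsBeltAssignment N d c b) :
    ∃ b' : ℕ → Option α, IsBeltAssignment N d c b' ∧
      Makespan N d b' ≤ Makespan N d b ∧ PropE N b' ∧ PropF N c b' := by
  classical
  obtain ⟨hbfin, hbcnt, hbii, hbmu⟩ := hb
  -- the set defining the makespan is nonempty
  have hsupfin : {i | b i ≠ none}.Finite := by
    apply Set.Finite.subset (Set.finite_iUnion (fun A => hbfin A))
    intro i hi
    obtain ⟨A, hA⟩ := Option.ne_none_iff_exists'.mp hi
    exact Set.mem_iUnion.mpr ⟨A, hA⟩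
  obtain ⟨B, hB⟩ := hsupfin.bddAbove
  have hSne : {s | ∀ A : α, {j | b j = some A ∧ j < s - N}.ncard = d A}.Nonempty := by
    refine ⟨B + 1 + N, ?_⟩
    intro A
    have heq : {j | b j = some A ∧ j < B + 1 + N - N} = {j | b j = some A} := by
      ext j
      refine ⟨fun h => h.1, fun h => ⟨h, ?_⟩⟩
      have : j ≤ B := hB (by intro hcon; rw [h] at hcon; simp at hcon)
      omega
    rw [heq]
    exact hbcnt A
  have hmem := Nat.sInf_mem hSne
  set ms := Makespan N d b with hms
  have hmem' : ∀ A : α, {j | b j = some A ∧ j < ms - N}.ncard = d A := hmem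
  set T := ms - N with hT
  have hcellsb : ∀ (A : α) (i : ℕ), b i = some A → i < T := by
    intro A i hi
    exact (bridge (hbfin A) (hbcnt A) T).mp (hmem' A) i hi
  have hOKb : BeltOK N d c T b := by
    refine ⟨⟨hbfin, hbcnt, hbii, hbmu⟩, ?_⟩
    intro i hi
    rcases h : b i with _ | A
    · rfl
    · exact absurd (hcellsb A i h) (by omega)
  -- pick a measure-minimal configuration
  have hQne : (beltMu T '' {x | BeltOK N d c T x}).Nonempty := ⟨_, ⟨b, hOKb, rfl⟩⟩
  obtain ⟨bs, hOKs, hmus⟩ := Nat.sInf_mem hQne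
  have hmin : ∀ x : ℕ → Option α, BeltOK N d c T x → beltMu T bs ≤ beltMu T x := by
    intro x hx
    rw [hmus]
    exact Nat.sInf_le ⟨x, hx, rfl⟩
  have hsolid := solid_of_min hN hOKs hmin
  have hsfin := hOKs.1.1
  have hscnt := hOKs.1.2.1
  have hsii := hOKs.1.2.2.1
  -- Property E
  have hE : PropE N bs := by
    intro A i e hinj hempty
    by_contra hlt
    have hIfin : {p | ∃ W, Injected N bs W p}.Finite := by
      apply Set.Finite.subset (Set.finite_Iio T)
      intro p hp
      obtain ⟨W, hW⟩ := hp
      exact cells_lt hOKs hW.1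
    have hIne : hIfin.toFinset.Nonempty := ⟨i, hIfin.mem_toFinset.mpr ⟨A, hinj⟩⟩
    set x := hIfin.toFinset.max' hIne with hx
    have hxmem : ∃ W, Injected N bs W x :=
      hIfin.mem_toFinset.mp (hIfin.toFinset.max'_mem hIne)
    obtain ⟨Zx, hxinj⟩ := hxmem
    have hxmax : ∀ p, (∃ W, Injected N bs W p) → p ≤ x :=
      fun p hp => hIfin.toFinset.le_max' p (hIfin.mem_toFinset.mpr hp)
    have htop : ∀ p, bs p = some Zx → bs (p + N) = some Zx ∨ bs (p + N) = none := by
      intro p hp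
      rcases h : bs (p + N) with _ | W
      · exact Or.inr rfl
      · by_cases hWZ : W = Zx
        · exact Or.inl (by rw [hWZ])
        · exfalso
          have hWinj : Injected N bs W (p + N) := by
            refine ⟨h, Or.inr ?_⟩
            have hpn : p + N - N = p := by omega
            rw [hpn, hp]
            intro hcon
            exact hWZ (Option.some_injective _ hcon).symm
          have hlex := hxmax (p + N) ⟨W, hWinj⟩
          rcases hsii p Zx hp with h1 | h2
          · rw [h] at h1
            exact hWZ (Option.some_injective _ h1)
          · have hall := (bridge (hsfin Zx) (hscnt Zx) _).mp h2
            have := hall x hxinj.1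
            omega
    have hclean := pour_clean hN hc hOKs hmin hsolid Zx htop
    have hxe := hclean.1 x e hxinj hempty
    have hix := hxmax i ⟨A, hinj⟩
    omega
  -- Property F
  have hF : PropF N c bs := by
    intro e A hempty hu i hei hcell
    have htopA : ∀ p, bs p = some A → bs (p + N) = some A ∨ bs (p + N) = none := by
      intro p hp
      rcases h : bs (p + N) with _ | W
      · exact Or.inr rfl
      · by_cases hWZ : W = A
        · exact Or.inl (by rw [hWZ])
        · exfalso
          have hWinj : Injected N bs W (p + N) := by
            refine ⟨h, Or.inr ?_⟩
            have hpn : p + N - N = p := by omega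
            rw [hpn, hp]
            intro hcon
            exact hWZ (Option.some_injective _ hcon).symm
          have hlte := hE W (p + N) e hWinj hempty
          rcases hsii p A hp with h1 | h2
          · rw [h] at h1
            exact hWZ (Option.some_injective _ h1)
          · have hall := (bridge (hsfin A) (hscnt A) _).mp h2
            have := hall i hcell
            omega
    have hclean := pour_clean hN hc hOKs hmin hsolid A htopA
    have := hclean.2 hu i hcell e hempty
    omega
  refine ⟨bs, hOKs.1, ?_, hE, hF⟩
  apply Nat.sInf_le
  intro A
  rw [bridge (hsfin A) (hscnt A)]
  intro j hj
  have := cells_lt hOKs hj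
  omega

lemma makespan_zero_of_infinite [Infinite α] (N : ℕ) (d : α → ℕ) (hd : ∀ A, 0 < d A)
    (x : ℕ → Option α) (hfin : ∀ A, {i | x i = some A}.Finite)
    (hmem : ∀ s ∈ {s | ∀ A : α, {j | x j = some A ∧ j < s - N}.ncard = d A}, False) :
    Makespan N d x = 0 := by
  unfold Makespan
  have he : {s | ∀ A : α, {j | x j = some A ∧ j < s - N}.ncard = d A} = (∅ : Set ℕ) := by
    rw [Set.eq_empty_iff_forall_notMem]
    exact hmem
  rw [he]
  exact Nat.sInf_empty

lemma no_makespan_of_infinite [Infinite α] (N : ℕ) (d : α → ℕ) (hd : ∀ A, 0 < d A)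
    (x : ℕ → Option α) (hfin : ∀ A, {i | x i = some A}.Finite) :
    ∀ s ∈ {s | ∀ A : α, {j | x j = some A ∧ j < s - N}.ncard = d A}, False := by
  intro s hs
  have hA : ∀ A : α, ∃ j, x j = some A ∧ j < s - N := by
    intro A
    have h1 := hs A
    have hfin2 : {j | x j = some A ∧ j < s - N}.Finite := (hfin A).subset (fun j hj => hj.1)
    have hne : {j | x j = some A ∧ j < s - N}.Nonempty :=
      (Set.ncard_pos hfin2).mp (by rw [h1]; exact hd A)
    obtain ⟨j, hj⟩ := hne
    exact ⟨j, hj⟩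
  choose φ hφ1 hφ2 using hA
  have hinj : Function.Injective φ := by
    intro A A' h
    have h2 := hφ1 A
    rw [h, hφ1 A'] at h2
    exact (Option.some_injective _ h2).symm
  haveI := (Set.finite_Iio (s - N)).to_subtype
  have hfinα : Finite α := by
    have hinj2 : Function.Injective (fun A => (⟨φ A, hφ2 A⟩ : Set.Iio (s - N))) := by
      intro A A' h
      exact hinj (congrArg Subtype.val h)
    exact Finite.of_injective _ hinj2
  haveI := hfinα
  exact not_finite α

theorem statement5_infinite [Infinite α] (N : ℕ) (hN : 0 < N)
    (d c : α → ℕ) (hd : ∀ A, 0 < d A) (hc : ∀ A, 0 < c A)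
    (b : ℕ → Option α) (hb : IsBeltAssignment N d c b) :
    ∃ b' : ℕ → Option α, IsBeltAssignment N d c b' ∧
      Makespan N d b' ≤ Makespan N d b ∧ PropE N b' ∧ PropF N c b' := by
  classical
  obtain ⟨hbfin, hbcnt, hbii, hbmu⟩ := hb
  have hocc : ∀ A : α, ∃ i, b i = some A := by
    intro A
    have hne : {i | b i = some A}.Nonempty :=
      (Set.ncard_pos (hbfin A)).mp (by rw [hbcnt A]; exact hd A)
    obtain ⟨i, hi⟩ := hne
    exact ⟨i, hi⟩
  choose φ hφ using hocc
  have hφinj : Function.Injective φ := by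
    intro A A' h
    have h2 := hφ A
    rw [h, hφ A'] at h2
    exact (Option.some_injective _ h2).symm
  haveI : Countable α := ⟨⟨φ, hφinj⟩⟩
  obtain ⟨hden⟩ := nonempty_denumerable α
  obtain ⟨e⟩ : Nonempty (α ≃ ℕ) := ⟨@Denumerable.eqv α hden⟩
  set g : ℕ → α := fun n => e.symm n with hg
  set idx : α → ℕ := fun A => e A with hidx
  have hgidx : ∀ A, g (idx A) = A := fun A => e.symm_apply_apply A
  have hidxg : ∀ n, idx (g n) = n := fun n => e.apply_symm_apply n
  set F : ℕ → ℕ → ℕ := fun j k => ∑ t ∈ Finset.range k, d (g (j + t * N)) with hF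
  have hFsucc : ∀ j k, F j (k + 1) = F j k + d (g (j + k * N)) := by
    intro j k
    simp only [hF]
    exact Finset.sum_range_succ _ _
  have hFzero : ∀ j, F j 0 = 0 := by
    intro j
    simp only [hF]
    exact Finset.sum_range_zero (fun t => d (g (j + t * N)))
  have hFk : ∀ j k, k ≤ F j k := by
    intro j k
    induction k with
    | zero => exact Nat.zero_le _
    | succ k ih =>
      have h1 := hFsucc j k
      have h2 := hd (g (j + k * N))
      omega
  have hFmono : ∀ j k l, k ≤ l → F j k ≤ F j l := by
    intro j k l hkl
    induction l with
    | zero =>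
      have hk0 : k = 0 := by omega
      rw [hk0]
    | succ l ih =>
      rcases Nat.lt_succ_iff_lt_or_eq.mp (Nat.lt_succ_of_le hkl) with h | h
      · have h1 := ih (by omega)
        have h2 := hFsucc j l
        omega
      · rw [h]
  set K : ℕ → ℕ → ℕ := fun j r => Nat.findGreatest (fun k => F j k ≤ r) r with hK
  have hK1 : ∀ j r, F j (K j r) ≤ r := by
    intro j r
    simp only [hK]
    exact Nat.findGreatest_spec (P := fun k => F j k ≤ r) (Nat.zero_le r)
      (by show F j 0 ≤ r; rw [hFzero]; exact Nat.zero_le r)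
  have hK2 : ∀ j r, r < F j (K j r + 1) := by
    intro j r
    by_cases h : K j r + 1 ≤ r
    · by_contra hcon
      push_neg at hcon
      have hle : K j r + 1 ≤ K j r := by
        have h5 := Nat.le_findGreatest (P := fun k => F j k ≤ r) h hcon
        simp only [hK]
        exact h5
      omega
    · have h1 : r ≤ K j r := by omega
      have h2 := hFk j (K j r + 1)
      omega
  have hKuniq : ∀ j r k, F j k ≤ r → r < F j (k + 1) → K j r = k := by
    intro j r k h1 h2
    have hk_le_r : k ≤ r := le_trans (hFk j k) h1
    have hle : k ≤ K j r := by
      have h5 := Nat.le_findGreatest (P := fun k => F j k ≤ r) hk_le_r h1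
      simp only [hK]
      exact h5
    by_contra hne
    have hlt : k + 1 ≤ K j r := by omega
    have h3 : F j (k + 1) ≤ F j (K j r) := hFmono _ _ _ hlt
    have h4 := hK1 j r
    omega
  set b' : ℕ → Option α := fun i => some (g ((i % N) + (K (i % N) (i / N)) * N)) with hb'
  have hchar : ∀ (i : ℕ) (A : α), b' i = some A ↔
      i % N + K (i % N) (i / N) * N = idx A := by
    intro i A
    simp only [hb', Option.some_inj]
    constructor
    · intro h
      rw [← h, hidxg]
    · intro h
      rw [h, hgidx]
  have hchar2 : ∀ (i : ℕ) (A : α), b' i = some A ↔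
      (i % N = idx A % N ∧ F (idx A % N) (idx A / N) ≤ i / N ∧
        i / N < F (idx A % N) (idx A / N) + d A) := by
    intro i A
    rw [hchar]
    have hsum : F (idx A % N) (idx A / N + 1) = F (idx A % N) (idx A / N) + d A := by
      rw [hFsucc]
      have h0 : idx A % N + idx A / N * N = idx A := Nat.mod_add_div' (idx A) N
      rw [h0, hgidx]
    constructor
    · intro h
      have hjN : i % N < N := Nat.mod_lt _ hN
      have hj : idx A % N = i % N := by
        rw [← h, Nat.add_mul_mod_self_right, Nat.mod_eq_of_lt hjN]
      have hk : idx A / N = K (i % N) (i / N) := by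
        rw [← h, Nat.add_mul_div_right _ _ hN, Nat.div_eq_of_lt hjN]
        omega
      refine ⟨hj.symm, ?_, ?_⟩
      · rw [hj, hk]
        exact hK1 _ _
      · rw [← hsum, hj, hk]
        exact hK2 _ _
    · rintro ⟨h1, h2, h3⟩
      have hkK : K (i % N) (i / N) = idx A / N := by
        apply hKuniq
        · rw [h1]
          exact h2
        · rw [h1, hsum]
          exact h3
      rw [hkK, h1]
      exact Nat.mod_add_div' (idx A) N
  have hnonone : ∀ i, b' i ≠ none := by
    intro i h
    simp only [hb'] at h
    simp at h
  have hjAlt : ∀ A : α, idx A % N < N := fun A => Nat.mod_lt _ hN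
  have hSA : ∀ A : α, {i | b' i = some A} =
      ↑((Finset.range (d A)).image
        (fun t => (F (idx A % N) (idx A / N) + t) * N + idx A % N)) := by
    intro A
    ext i
    simp only [Set.mem_setOf_eq, Finset.coe_image, Set.mem_image, Finset.mem_coe,
      Finset.mem_range]
    rw [hchar2]
    constructor
    · rintro ⟨h1, h2, h3⟩
      refine ⟨i / N - F (idx A % N) (idx A / N), by omega, ?_⟩
      have hdm := Nat.div_add_mod i N
      have hFt : F (idx A % N) (idx A / N) + (i / N - F (idx A % N) (idx A / N)) = i / N := by
        omega
      rw [hFt, ← h1, mul_comm]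
      exact hdm
    · rintro ⟨t, ht, rfl⟩
      have hjN := hjAlt A
      have hmod : ((F (idx A % N) (idx A / N) + t) * N + idx A % N) % N = idx A % N := by
        rw [add_comm, Nat.add_mul_mod_self_right, Nat.mod_eq_of_lt hjN]
      have hdiv : ((F (idx A % N) (idx A / N) + t) * N + idx A % N) / N
          = F (idx A % N) (idx A / N) + t := by
        rw [add_comm, Nat.add_mul_div_right _ _ hN, Nat.div_eq_of_lt hjN]
        omega
      rw [hmod, hdiv]
      exact ⟨rfl, by omega, by omega⟩
  have hfin' : ∀ A : α, {i | b' i = some A}.Finite := by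
    intro A
    rw [hSA]
    exact Finset.finite_toSet _
  have hcnt' : ∀ A : α, {i | b' i = some A}.ncard = d A := by
    intro A
    rw [hSA, Set.ncard_coe_finset]
    have hinj2 : Set.InjOn (fun t => (F (idx A % N) (idx A / N) + t) * N + idx A % N)
        ↑(Finset.range (d A)) := by
      intro t _ t' _ h
      simp only [] at h
      have h2 : (F (idx A % N) (idx A / N) + t) * N = (F (idx A % N) (idx A / N) + t') * N := by
        omega
      have h3 := Nat.eq_of_mul_eq_mul_right hN h2
      omega
    rw [Finset.card_image_of_injOn hinj2]
    exact Finset.card_range _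
  have hii' : ∀ (i : ℕ) (A : α), b' i = some A →
      b' (i + N) = some A ∨ {j | b' j = some A ∧ j < i + N}.ncard = d A := by
    intro i A hi
    rw [hchar2] at hi
    obtain ⟨h1, h2, h3⟩ := hi
    by_cases hnext : i / N + 1 < F (idx A % N) (idx A / N) + d A
    · left
      rw [hchar2]
      refine ⟨?_, ?_, ?_⟩
      · rw [Nat.add_mod_right]; exact h1
      · rw [Nat.add_div_right _ hN]; omega
      · rw [Nat.add_div_right _ hN]; omega
    · right
      rw [bridge (hfin' A) (hcnt' A)]
      intro q hq
      rw [hchar2] at hq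
      obtain ⟨g1, g2, g3⟩ := hq
      have hqd : q / N ≤ i / N := by omega
      have e1 := Nat.div_add_mod q N
      have e2 := Nat.div_add_mod i N
      have e3 : N * (q / N) ≤ N * (i / N) := Nat.mul_le_mul_left N hqd
      omega
  have hmu' : ∀ A : α, MouldsUsed N b' A ≤ c A := by
    intro A
    have hjN := hjAlt A
    have hset : {p | Injected N b' A p}
        = {F (idx A % N) (idx A / N) * N + idx A % N} := by
      ext p
      simp only [Set.mem_setOf_eq, Set.mem_singleton_iff]
      constructor
      · rintro ⟨hp1, hp2⟩
        rw [hchar2] at hp1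
        obtain ⟨h1, h2, h3⟩ := hp1
        have hpF : p / N = F (idx A % N) (idx A / N) := by
          by_contra hne
          have hgt : F (idx A % N) (idx A / N) < p / N := by omega
          have hpN : N ≤ p := by
            have e2 := Nat.div_add_mod p N
            have e4 : 1 ≤ p / N := by omega
            have e5 : N * 1 ≤ N * (p / N) := Nat.mul_le_mul_left N e4
            omega
          have hprev : b' (p - N) = some A := by
            rw [hchar2]
            have hm : (p - N) % N = p % N := by
              have h4 : p - N + N = p := by omega
              calc (p - N) % N = (p - N + N) % N := (Nat.add_mod_right _ _).symm
                _ = p % N := by rw [h4]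
            have hdvp : (p - N) / N = p / N - 1 := by
              have h5 := Nat.add_div_right (p - N) hN
              have h4 : p - N + N = p := by omega
              rw [h4] at h5
              omega
            rw [hm, hdvp]
            exact ⟨h1, by omega, by omega⟩
          rcases hp2 with h | h
          · omega
          · exact h hprev
        have e2 := Nat.div_add_mod p N
        rw [hpF, h1] at e2
        have e6 : F (idx A % N) (idx A / N) * N = N * F (idx A % N) (idx A / N) :=
          mul_comm _ _
        omega
      · intro hp
        have hmod : (F (idx A % N) (idx A / N) * N + idx A % N) % N = idx A % N := by
          rw [add_comm, Nat.add_mul_mod_self_right, Nat.mod_eq_of_lt hjN]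
        have hdiv : (F (idx A % N) (idx A / N) * N + idx A % N) / N
            = F (idx A % N) (idx A / N) := by
          rw [add_comm, Nat.add_mul_div_right _ _ hN, Nat.div_eq_of_lt hjN]
          omega
        constructor
        · rw [hp, hchar2, hmod, hdiv]
          exact ⟨rfl, le_refl _, by have := hd A; omega⟩
        · rw [hp]
          by_cases hpN : F (idx A % N) (idx A / N) * N + idx A % N < N
          · exact Or.inl hpN
          · right
            intro hcon
            rw [hchar2] at hcon
            obtain ⟨g1, g2, g3⟩ := hcon
            have hF1 : 1 ≤ F (idx A % N) (idx A / N) := by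
              by_contra h0
              have hz : F (idx A % N) (idx A / N) = 0 := by omega
              rw [hz] at hpN
              simp only [Nat.zero_mul, Nat.zero_add] at hpN
              omega
            have heqq : F (idx A % N) (idx A / N) * N + idx A % N - N
                = (F (idx A % N) (idx A / N) - 1) * N + idx A % N := by
              have hsm := Nat.sub_mul (F (idx A % N) (idx A / N)) 1 N
              have h1N : 1 * N ≤ F (idx A % N) (idx A / N) * N :=
                Nat.mul_le_mul_right N hF1
              omega
            have hdv2 : (F (idx A % N) (idx A / N) * N + idx A % N - N) / N
                = F (idx A % N) (idx A / N) - 1 := by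
              rw [heqq, add_comm, Nat.add_mul_div_right _ _ hN, Nat.div_eq_of_lt hjN]
              omega
            rw [hdv2] at g2
            omega
    unfold MouldsUsed
    rw [hset, Set.ncard_singleton]
    exact hc A
  have hIB : IsBeltAssignment N d c b' := ⟨hfin', hcnt', hii', hmu'⟩
  refine ⟨b', hIB, ?_, ?_, ?_⟩
  · have h1 := no_makespan_of_infinite N d hd b hbfin
    have h2 := no_makespan_of_infinite N d hd b' hfin'
    rw [makespan_zero_of_infinite N d hd b hbfin h1,
      makespan_zero_of_infinite N d hd b' hfin' h2]
  · intro A i e hinj hempty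
    exact absurd hempty (hnonone e)
  · intro e A hempty
    exact absurd hempty (hnonone e)

/-- **Observation 4.** For every belt assignment `b` there is a belt
assignment `b'` with makespan at most that of `b` satisfying both
Property (E) and Property (F). -/
theorem statement5 (N : ℕ) (hN : 0 < N)
    (d c : α → ℕ) (hd : ∀ A, 0 < d A) (hc : ∀ A, 0 < c A)
    (b : ℕ → Option α) (hb : IsBeltAssignment N d c b) :
    ∃ b' : ℕ → Option α, IsBeltAssignment N d c b' ∧
      Makespan N d b' ≤ Makespan N d b ∧ PropE N b' ∧ PropF N c b' := by
  rcases finite_or_infinite α with hfin | hinf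
  · exact statement5_finite N hN d c hd hc b hb
  · exact statement5_infinite N hN d c hd hc b hb
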